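/- For every natural number k, one plus the total number of nonempty words over the two-letter alphabet {a, b} of length at most k that begin with the letter a and contain no three consecutive equal letters equals F_{k+3} - 1. Equivalently, the growth function of the 2-valued coset group of Z/3 * Z/3 satisfies ξ_k = F_{k+3} - 1. -/

import Mathlib

def Cub (w : List Bool) : Prop := ∀ c : Bool, ¬ [c, c, c] <:+: w

instance : DecidablePred Cub := fun _ => inferInstanceAs (Decidable (∀ _, ¬ _))

/-- All words of length `n`. -/
def allW : ℕ → Finset (List Bool)
  | 0 => {[]}
  | n+1 => (allW n).image (false :: ·) ∪ (allW n).image (true :: ·)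

lemma mem_allW : ∀ {n : ℕ} {w : List Bool}, w ∈ allW n ↔ w.length = n
  | 0, w => by simp [allW, List.length_eq_zero_iff]
  | n+1, [] => by simp [allW]
  | n+1, b :: t => by cases b <;> simp [allW, mem_allW (n := n)]

def Fw (n : ℕ) : Finset (List Bool) :=
  (allW n).filter (fun w => w.head? = some false ∧ Cub w)

def Gw (n : ℕ) : Finset (List Bool) :=
  (allW n).filter (fun w => w.head? = some true ∧ Cub w)

lemma cub_infix {v w : List Bool} (h : Cub w) (hv : v <:+: w) : Cub v :=
  fun c hc => h c (hc.trans hv)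

lemma map_not_not (w : List Bool) : (w.map not).map not = w := by
  rw [List.map_map]
  simp [Function.comp_def]

lemma cub_map_not {w : List Bool} (h : Cub w) : Cub (w.map not) := by
  intro c hc
  have h2 := hc.map not
  rw [map_not_not] at h2
  simp only [List.map_cons, List.map_nil] at h2
  exact h (!c) h2

lemma card_Gw_eq (n : ℕ) : (Gw n).card = (Fw n).card := by
  apply Finset.card_nbij' (fun w => w.map not) (fun w => w.map not)
  · intro w hw
    simp only [Finset.mem_coe, Gw, Finset.mem_filter, mem_allW] at hw
    simp only [Finset.mem_coe, Fw, Finset.mem_filter, mem_allW]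
    obtain ⟨hl, hh, hc⟩ := hw
    refine ⟨by simpa using hl, ?_, cub_map_not hc⟩
    cases w with
    | nil => simp at hh
    | cons b t => simp at hh; simp [hh]
  · intro w hw
    simp only [Finset.mem_coe, Fw, Finset.mem_filter, mem_allW] at hw
    simp only [Finset.mem_coe, Gw, Finset.mem_filter, mem_allW]
    obtain ⟨hl, hh, hc⟩ := hw
    refine ⟨by simpa using hl, ?_, cub_map_not hc⟩
    cases w with
    | nil => simp at hh
    | cons b t => simp at hh; simp [hh]
  · intro w _; exact map_not_not w
  · intro w _; exact map_not_not w

lemma cub_cons_false {t : List Bool} (hc : Cub t) (hh : t.head? = some true) :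
    Cub (false :: t) := by
  intro c h
  rcases List.infix_cons_iff.mp h with h | h
  · rcases h with ⟨r, hr⟩
    cases t with
    | nil => simp at hh
    | cons b s =>
      simp at hh
      cases c <;> simp_all
  · exact hc c h

lemma cub_cons_cons_false {s : List Bool} (hc : Cub s) (hh : s.head? = some true) :
    Cub (false :: false :: s) := by
  have h1 : Cub (false :: s) := by
    intro c h
    rcases List.infix_cons_iff.mp h with h | h
    · rcases h with ⟨r, hr⟩
      cases s with
      | nil => simp at hh
      | cons b u => simp at hh; cases c <;> simp_all
    · exact hc c h
  intro c h
  rcases List.infix_cons_iff.mp h with h | h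
  · rcases h with ⟨r, hr⟩
    cases s with
    | nil => simp at hh
    | cons b u => simp at hh; cases c <;> simp_all
  · exact h1 c h

lemma Fw_rec (n : ℕ) :
    Fw (n + 3) = (Gw (n + 2)).image (false :: ·) ∪
      (Gw (n + 1)).image (fun s => false :: false :: s) := by
  ext w
  simp only [Fw, Gw, Finset.mem_filter, mem_allW, Finset.mem_union, Finset.mem_image]
  constructor
  · rintro ⟨hl, hh, hc⟩
    match w, hl with
    | b0 :: b1 :: b2 :: rest, hl =>
      simp only [List.head?_cons, Option.some.injEq] at hh
      subst hh
      simp only [List.length_cons] at hl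
      cases b1 with
      | true =>
        left
        refine ⟨true :: b2 :: rest, ⟨by simp only [List.length_cons]; omega, rfl, ?_⟩, rfl⟩
        exact cub_infix hc ((List.suffix_cons _ _).isInfix)
      | false =>
        right
        cases b2 with
        | false =>
          exact ((hc false ⟨[], rest, rfl⟩)).elim
        | true =>
          refine ⟨true :: rest, ⟨by simp only [List.length_cons]; omega, rfl, ?_⟩, rfl⟩
          have hs : (true :: rest) <:+ (false :: false :: true :: rest) :=
            ⟨[false, false], rfl⟩
          exact cub_infix hc hs.isInfix
  · rintro (⟨t, ⟨hl, hh, hc⟩, rfl⟩ | ⟨s, ⟨hl, hh, hc⟩, rfl⟩)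
    · exact ⟨by simp only [List.length_cons]; omega, by simp, cub_cons_false hc hh⟩
    · exact ⟨by simp only [List.length_cons]; omega, by simp, cub_cons_cons_false hc hh⟩

lemma Fw_disjoint_parts (n : ℕ) :
    Disjoint ((Gw (n + 2)).image (false :: ·))
      ((Gw (n + 1)).image (fun s => false :: false :: s)) := by
  rw [Finset.disjoint_left]
  rintro w hw1 hw2
  simp only [Finset.mem_image, Gw, Finset.mem_filter] at hw1 hw2
  obtain ⟨t, ⟨_, ht, _⟩, rfl⟩ := hw1
  obtain ⟨s, ⟨_, hs, _⟩, he⟩ := hw2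
  injection he with _ he2
  rw [← he2] at ht
  simp at ht

lemma card_Fw : ∀ n : ℕ, (Fw (n + 1)).card = Nat.fib (n + 2)
  | 0 => by decide
  | 1 => by decide
  | n + 2 => by
    rw [show n + 2 + 1 = n + 3 from rfl, Fw_rec n,
      Finset.card_union_of_disjoint (Fw_disjoint_parts n),
      Finset.card_image_of_injective _ (fun a b h => by injection h),
      Finset.card_image_of_injective _
        (fun a b h => by injection h with _ h; injection h),
      card_Gw_eq, card_Gw_eq, card_Fw (n + 1), card_Fw n]
    have h1 := Nat.fib_add_two (n := n + 2)
    rw [show n + 1 + 2 = n + 3 from rfl]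
    rw [show n + 2 + 1 = n + 3 from rfl] at h1
    omega

lemma card_Fw_zero : (Fw 0).card = 0 := by decide

lemma sum_card_Fw (k : ℕ) :
    (∑ n ∈ Finset.range (k + 1), (Fw n).card) + 2 = Nat.fib (k + 3) := by
  induction k with
  | zero => rw [Finset.sum_range_one, card_Fw_zero]; decide
  | succ k ih =>
    rw [Finset.sum_range_succ, card_Fw k]
    have h1 := Nat.fib_add_two (n := k + 2)
    rw [show k + 2 + 1 = k + 3 from rfl] at h1
    rw [show k + 1 + 3 = k + 2 + 2 from rfl]
    omega

def Tw (k : ℕ) : Finset (List Bool) := (Finset.range (k + 1)).biUnion Fw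

lemma card_Tw (k : ℕ) : (Tw k).card + 2 = Nat.fib (k + 3) := by
  rw [Tw, Finset.card_biUnion, sum_card_Fw]
  intro i _ j _ hij
  rw [Function.onFun, Finset.disjoint_left]
  intro w hwi hwj
  simp only [Fw, Finset.mem_filter, mem_allW] at hwi hwj
  exact hij (hwi.1 ▸ hwj.1 ▸ rfl)

/-- One plus the number of nonempty cubeless words over `{a, b}` (encoded as `Bool`,
with `a = false`) of length at most `k` that begin with the letter `a` equals
`F (k + 3) - 1`: the growth function of the 2-valued coset group of `ℤ/3 * ℤ/3`. -/
theorem growth_Z3_Z3 (k : ℕ) :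
    1 + Nat.card {w : List Bool //
        w ≠ [] ∧ w.length ≤ k ∧ w.head? = some false ∧ ∀ c : Bool, ¬ [c, c, c] <:+: w} =
      Nat.fib (k + 3) - 1 := by
  have hset : {w : List Bool |
      w ≠ [] ∧ w.length ≤ k ∧ w.head? = some false ∧ ∀ c : Bool, ¬ [c, c, c] <:+: w} =
      ↑(Tw k) := by
    ext w
    simp only [Set.mem_setOf_eq, Finset.mem_coe, Tw, Finset.mem_biUnion, Finset.mem_range,
      Fw, Finset.mem_filter, mem_allW]
    constructor
    · rintro ⟨hne, hlen, hh, hc⟩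
      exact ⟨w.length, by omega, rfl, hh, hc⟩
    · rintro ⟨n, hn, hl, hh, hc⟩
      refine ⟨?_, by omega, hh, hc⟩
      intro h; subst h; simp at hh
  have h1 : Nat.card {w : List Bool //
      w ≠ [] ∧ w.length ≤ k ∧ w.head? = some false ∧ ∀ c : Bool, ¬ [c, c, c] <:+: w} =
      (Tw k).card := by
    calc Nat.card {w : List Bool //
        w ≠ [] ∧ w.length ≤ k ∧ w.head? = some false ∧ ∀ c : Bool, ¬ [c, c, c] <:+: w}
        = ({w : List Bool | w ≠ [] ∧ w.length ≤ k ∧ w.head? = some false ∧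
            ∀ c : Bool, ¬ [c, c, c] <:+: w} : Set (List Bool)).ncard :=
          Nat.card_coe_set_eq _
      _ = (↑(Tw k) : Set (List Bool)).ncard := by rw [hset]
      _ = (Tw k).card := Set.ncard_coe_finset _
  rw [h1]
  have := card_Tw k
  omega
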